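/- Let U be a 2-dimensional complex inner product space, regarded as a 4-dimensional real inner product space with g = Re⟨·,·⟩, and let ξ be a complex-valued alternating ℂ-bilinear form on U of unit length, i.e. |ξ(b₁,b₂)| = 1 for some (equivalently, any) orthonormal ℂ-basis (b₁,b₂) of U. Then there exist orthogonal complex structures J₁ and J₂ on the real inner product space (U, g) such that (Re ξ)(u,v) = g(J₁u, v) and (Im ξ)(u,v) = g(J₂u, v) for all u, v ∈ U; that is, Re ξ and Im ξ are Hermitian 2-forms for the metric g (for, in general, different compatible complex structures on U). -/

import Mathlib

open scoped InnerProductSpace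

section Aux

variable {U : Type*} [NormedAddCommGroup U] [InnerProductSpace ℂ U]

lemma upd0 (u v x : U) : Function.update ![u, v] 0 x = ![x, v] := by
  funext i; fin_cases i <;> simp

lemma upd1 (u v x : U) : Function.update ![u, v] 1 x = ![u, x] := by
  funext i; fin_cases i <;> simp

lemma xi_add0 (f : U [⋀^Fin 2]→ₗ[ℂ] ℂ) (x y v : U) :
    f ![x + y, v] = f ![x, v] + f ![y, v] := by
  have := f.map_update_add ![x, v] 0 x y
  simpa [upd0] using this

lemma xi_add1 (f : U [⋀^Fin 2]→ₗ[ℂ] ℂ) (u x y : U) :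
    f ![u, x + y] = f ![u, x] + f ![u, y] := by
  have := f.map_update_add ![u, x] 1 x y
  simpa [upd1] using this

lemma xi_smul0 (f : U [⋀^Fin 2]→ₗ[ℂ] ℂ) (a : ℂ) (x v : U) :
    f ![a • x, v] = a * f ![x, v] := by
  have := f.map_update_smul ![x, v] 0 a x
  simpa [upd0] using this

lemma xi_smul1 (f : U [⋀^Fin 2]→ₗ[ℂ] ℂ) (a : ℂ) (u x : U) :
    f ![u, a • x] = a * f ![u, x] := by
  have := f.map_update_smul ![u, x] 1 a x
  simpa [upd1] using this

/-- The antilinear "structure map" associated to `d`. -/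
noncomputable def Jmap (b : OrthonormalBasis (Fin 2) ℂ U) (d : ℂ) : U →ₗ[ℝ] U where
  toFun u := (-(d * star ⟪b 1, u⟫_ℂ)) • b 0 + (d * star ⟪b 0, u⟫_ℂ) • b 1
  map_add' u v := by
    simp [inner_add_right, star_add, mul_add, add_smul]
    module
  map_smul' r u := by
    simp only [← algebraMap_smul ℂ r, Complex.coe_algebraMap, inner_smul_right,
      star_mul', Complex.star_def, Complex.conj_ofReal, RingHom.id_apply]
    module

end Aux

theorem re_and_im_of_unit_two_zero_form_are_hermitian
    {U : Type*} [NormedAddCommGroup U] [InnerProductSpace ℂ U]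
    (hdim : Module.finrank ℂ U = 2)
    (ξ : U [⋀^Fin 2]→ₗ[ℂ] ℂ)
    (hξ : ∃ b : OrthonormalBasis (Fin 2) ℂ U, ‖ξ ![b 0, b 1]‖ = 1) :
    ∃ J₁ J₂ : U →ₗ[ℝ] U,
      (∀ u : U, J₁ (J₁ u) = -u) ∧
      (∀ u v : U, (⟪J₁ u, J₁ v⟫_ℂ).re = (⟪u, v⟫_ℂ).re) ∧
      (∀ u : U, J₂ (J₂ u) = -u) ∧
      (∀ u v : U, (⟪J₂ u, J₂ v⟫_ℂ).re = (⟪u, v⟫_ℂ).re) ∧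
      (∀ u v : U, (ξ ![u, v]).re = (⟪J₁ u, v⟫_ℂ).re) ∧
      (∀ u v : U, (ξ ![u, v]).im = (⟪J₂ u, v⟫_ℂ).re) := by
  obtain ⟨b, hb⟩ := hξ
  set c : ℂ := ξ ![b 0, b 1] with hc
  have hcc : c * star c = 1 := by
    rw [Complex.star_def, Complex.mul_conj]
    norm_cast
    rw [Complex.normSq_eq_norm_sq, hb]; norm_num
  -- orthonormality
  have hON : ∀ i j : Fin 2, ⟪b i, b j⟫_ℂ = if i = j then 1 else 0 :=
    orthonormal_iff_ite.mp b.orthonormal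
  -- coordinates
  have hrepr : ∀ u : U, ⟪b 0, u⟫_ℂ • b 0 + ⟪b 1, u⟫_ℂ • b 1 = u := by
    intro u
    have := b.sum_repr' u
    rwa [Fin.sum_univ_two] at this
  -- key expansion of ξ
  have key : ∀ u v : U,
      ξ ![u, v] = (⟪b 0, u⟫_ℂ * ⟪b 1, v⟫_ℂ - ⟪b 1, u⟫_ℂ * ⟪b 0, v⟫_ℂ) * c := by
    intro u v
    have hswap : ξ ![b 1, b 0] = -c := by
      have h : (![b 0, b 1] ∘ Equiv.swap (0 : Fin 2) 1) = ![b 1, b 0] := by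
        funext i; fin_cases i <;> simp
      have := ξ.map_swap (v := ![b 0, b 1]) (i := (0 : Fin 2)) (j := 1) (by decide)
      rw [h] at this
      rw [this, hc]
    have h00 : ξ ![b 0, b 0] = 0 :=
      ξ.map_eq_zero_of_eq ![b 0, b 0] (by simp) (i := 0) (j := 1) (by decide)
    have h11 : ξ ![b 1, b 1] = 0 :=
      ξ.map_eq_zero_of_eq ![b 1, b 1] (by simp) (i := 0) (j := 1) (by decide)
    conv_lhs => rw [← hrepr u, ← hrepr v]
    rw [xi_add0, xi_smul0, xi_smul0, xi_add1, xi_add1, xi_smul1, xi_smul1,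
      xi_smul1, xi_smul1, h00, h11, hswap, ← hc]
    ring
  -- properties of Jmap for unit d
  have hcoord : ∀ (d : ℂ) (u : U),
      ⟪b 0, Jmap b d u⟫_ℂ = -(d * star ⟪b 1, u⟫_ℂ) ∧
      ⟪b 1, Jmap b d u⟫_ℂ = d * star ⟪b 0, u⟫_ℂ := by
    intro d u
    constructor <;>
    · show ⟪_, (-(d * star ⟪b 1, u⟫_ℂ)) • b 0 + (d * star ⟪b 0, u⟫_ℂ) • b 1⟫_ℂ = _
      rw [inner_add_right, inner_smul_right, inner_smul_right, hON, hON]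
      simp
  have hsq : ∀ d : ℂ, d * star d = 1 → ∀ u : U, Jmap b d (Jmap b d u) = -u := by
    intro d hd u
    show (-(d * star ⟪b 1, Jmap b d u⟫_ℂ)) • b 0 + (d * star ⟪b 0, Jmap b d u⟫_ℂ) • b 1 = -u
    rw [(hcoord d u).1, (hcoord d u).2]
    have e0 : -(d * star (d * star ⟪b 0, u⟫_ℂ)) = -⟪b 0, u⟫_ℂ := by
      rw [star_mul', star_star]
      rw [show d * (star d * ⟪b 0, u⟫_ℂ) = d * star d * ⟪b 0, u⟫_ℂ by ring, hd, one_mul]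
    have e1 : d * star (-(d * star ⟪b 1, u⟫_ℂ)) = -⟪b 1, u⟫_ℂ := by
      rw [star_neg, star_mul', star_star, mul_neg]
      rw [show d * (star d * ⟪b 1, u⟫_ℂ) = d * star d * ⟪b 1, u⟫_ℂ by ring, hd, one_mul]
    rw [e0, e1, neg_smul, neg_smul, ← neg_add, hrepr u]
  have hinner : ∀ (d : ℂ) (u v : U),
      ⟪Jmap b d u, v⟫_ℂ = star d * (⟪b 0, u⟫_ℂ * ⟪b 1, v⟫_ℂ - ⟪b 1, u⟫_ℂ * ⟪b 0, v⟫_ℂ) := by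
    intro d u v
    have := b.sum_inner_mul_inner (Jmap b d u) v
    rw [Fin.sum_univ_two] at this
    rw [← this, ← inner_conj_symm (Jmap b d u) (b 0), ← inner_conj_symm (Jmap b d u) (b 1)]
    rw [show (starRingEnd ℂ) ⟪b 0, Jmap b d u⟫_ℂ = star ⟪b 0, Jmap b d u⟫_ℂ from rfl,
        show (starRingEnd ℂ) ⟪b 1, Jmap b d u⟫_ℂ = star ⟪b 1, Jmap b d u⟫_ℂ from rfl,
        (hcoord d u).1, (hcoord d u).2]
    rw [star_neg, star_mul', star_star, star_mul', star_star]
    ring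
  have hiso : ∀ d : ℂ, d * star d = 1 → ∀ u v : U,
      ⟪Jmap b d u, Jmap b d v⟫_ℂ = star ⟪u, v⟫_ℂ := by
    intro d hd u v
    rw [hinner d u (Jmap b d v), (hcoord d v).1, (hcoord d v).2]
    have h2 := b.sum_inner_mul_inner u v
    rw [Fin.sum_univ_two] at h2
    rw [← h2]
    have f0 : ⟪u, b 0⟫_ℂ = star ⟪b 0, u⟫_ℂ := (inner_conj_symm _ _).symm
    have f1 : ⟪u, b 1⟫_ℂ = star ⟪b 1, u⟫_ℂ := (inner_conj_symm _ _).symm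
    rw [f0, f1, star_add, star_mul', star_mul', star_star, star_star]
    have hd' : star d * d = 1 := by rw [mul_comm]; exact hd
    linear_combination (⟪b 0, u⟫_ℂ * star ⟪b 0, v⟫_ℂ + ⟪b 1, u⟫_ℂ * star ⟪b 1, v⟫_ℂ) * hd'
  -- choose d₁ and d₂
  have hd₁ : star c * star (star c) = 1 := by
    rw [star_star, mul_comm]; exact hcc
  have hd₂ : Complex.I * star c * star (Complex.I * star c) = 1 := by
    rw [star_mul', star_star, Complex.star_def, Complex.conj_I]
    calc Complex.I * star c * (-Complex.I * c)
        = (Complex.I * -Complex.I) * (c * star c) := by ring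
      _ = 1 := by rw [hcc, mul_one, mul_neg, Complex.I_mul_I, neg_neg]
  refine ⟨Jmap b (star c), Jmap b (Complex.I * star c), hsq _ hd₁, ?_, hsq _ hd₂, ?_, ?_, ?_⟩
  · intro u v; rw [hiso _ hd₁ u v, Complex.star_def, Complex.conj_re]
  · intro u v; rw [hiso _ hd₂ u v, Complex.star_def, Complex.conj_re]
  · intro u v
    rw [key u v, hinner (star c)]
    show _ = (star (star c) * _).re
    rw [star_star, mul_comm]
  · intro u v
    rw [key u v, hinner (Complex.I * star c)]
    have hs : star (Complex.I * star c) = c * -Complex.I := by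
      rw [star_mul', star_star, Complex.star_def, Complex.conj_I]
      exact mul_comm _ _
    rw [hs]
    set w : ℂ := ⟪b 0, u⟫_ℂ * ⟪b 1, v⟫_ℂ - ⟪b 1, u⟫_ℂ * ⟪b 0, v⟫_ℂ
    have hw : c * -Complex.I * w = -Complex.I * (w * c) := by ring
    rw [hw]
    simp [Complex.mul_re]
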